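/- Let C ⊆ ℝ^m be a convex cone, let x ∈ C and y ∈ ℝ^m with x ≠ y, let s < 0, and set a := x + s•(y − x). Assume a ∈ C and x + s'•(y − x) ∉ C for every s' < s (so a is the point where the line through x and y exits C beyond x). Then m(x,y) = (−s)/(1−s) = ‖x − a‖ / ‖y − a‖. -/

import Mathlib

/-- Birkhoff coefficient `M(x,y) = inf {λ ≥ 0 : λ•y - x ∈ C}`. -/
noncomputable def Mcoef {m : ℕ} (C : Set (EuclideanSpace ℝ (Fin m)))
    (x y : EuclideanSpace ℝ (Fin m)) : ℝ :=
  sInf {l : ℝ | 0 ≤ l ∧ l • y - x ∈ C}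

/-- Birkhoff coefficient `m(x,y) = sup {λ ≥ 0 : x - λ•y ∈ C}`. -/
noncomputable def mcoef {m : ℕ} (C : Set (EuclideanSpace ℝ (Fin m)))
    (x y : EuclideanSpace ℝ (Fin m)) : ℝ :=
  sSup {l : ℝ | 0 ≤ l ∧ x - l • y ∈ C}

/-- Birkhoff's version of the Hilbert metric `d_h(x,y) = (1/2)·log(M(x,y)/m(x,y))`. -/
noncomputable def dh {m : ℕ} (C : Set (EuclideanSpace ℝ (Fin m)))
    (x y : EuclideanSpace ℝ (Fin m)) : ℝ :=
  (1 / 2) * Real.log (Mcoef C x y / mcoef C x y)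

/-- If `a = x + s•(y − x)` (with `s < 0`) is the point where the line through `x` and
`y` exits the convex cone `C` beyond `x`, then `m(x,y) = (−s)/(1−s) = ‖x − a‖/‖y − a‖`. -/
theorem stmt3 {m : ℕ} (C : Set (EuclideanSpace ℝ (Fin m)))
    (hadd : ∀ a ∈ C, ∀ b ∈ C, a + b ∈ C)
    (hsmul : ∀ c : ℝ, 0 < c → ∀ a ∈ C, c • a ∈ C)
    (x y : EuclideanSpace ℝ (Fin m)) (hx : x ∈ C) (hxy : x ≠ y)
    (s : ℝ) (hs : s < 0)
    (a : EuclideanSpace ℝ (Fin m)) (hadef : a = x + s • (y - x))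
    (ha : a ∈ C)
    (hout : ∀ s' : ℝ, s' < s → x + s' • (y - x) ∉ C) :
    mcoef C x y = (-s) / (1 - s) ∧ (-s) / (1 - s) = ‖x - a‖ / ‖y - a‖ := by
  have h1s : (0:ℝ) < 1 - s := by linarith
  set t : ℝ := (-s) / (1 - s) with ht
  have ht0 : 0 ≤ t := div_nonneg (by linarith) (by linarith)
  have ht1 : t < 1 := by rw [ht, div_lt_one h1s]; linarith
  -- key equivalence for 0 ≤ l < 1
  have key : ∀ l : ℝ, 0 ≤ l → l < 1 →
      (x - l • y ∈ C ↔ x + (-l / (1 - l)) • (y - x) ∈ C) := by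
    intro l hl0 hl1
    have h1l : (0:ℝ) < 1 - l := by linarith
    constructor
    · intro h
      have h2 := hsmul (1 / (1 - l)) (by positivity) _ h
      have : x + (-l / (1 - l)) • (y - x) = (1 / (1 - l)) • (x - l • y) := by
        match_scalars <;> field_simp <;> ring
      rw [this]; exact h2
    · intro h
      have h2 := hsmul (1 - l) h1l _ h
      have : x - l • y = (1 - l) • (x + (-l / (1 - l)) • (y - x)) := by
        match_scalars <;> field_simp <;> ring
      rw [this]; exact h2
  -- t is in the set
  have htmem : t ∈ {l : ℝ | 0 ≤ l ∧ x - l • y ∈ C} := by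
    refine ⟨ht0, ?_⟩
    have h2 := hsmul (1 / (1 - s)) (by positivity) _ ha
    have : x - t • y = (1 / (1 - s)) • a := by
      rw [hadef, ht]; match_scalars <;> field_simp <;> ring
    rw [this]; exact h2
  -- t is an upper bound
  have hub : ∀ l ∈ {l : ℝ | 0 ≤ l ∧ x - l • y ∈ C}, l ≤ t := by
    rintro l ⟨hl0, hlC⟩
    by_contra hlt
    push_neg at hlt
    rcases lt_or_ge l 1 with hl1 | hl1
    · have hC := (key l hl0 hl1).mp hlC
      refine hout (-l / (1 - l)) ?_ hC
      rw [div_lt_iff₀ (by linarith : (0:ℝ) < 1 - l)]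
      have h := (div_lt_iff₀ h1s).mp hlt
      nlinarith [h]
    · -- l ≥ 1 : pass to l' = (t+1)/2 via convexity
      set l' : ℝ := (t + 1) / 2 with hl'
      have hl'0 : 0 < l' := by positivity
      have hl'1 : l' < 1 := by rw [hl']; linarith
      have hθ : 0 < l' / l := by positivity
      have hθ1 : l' / l < 1 := by
        rw [div_lt_one (by linarith : (0:ℝ) < l)]; linarith
      have hmem : x - l' • y ∈ C := by
        have h1 := hsmul (1 - l' / l) (by linarith) x hx
        have h2 := hsmul (l' / l) hθ _ hlC
        have h3 := hadd _ h1 _ h2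
        have : x - l' • y = (1 - l' / l) • x + (l' / l) • (x - l • y) := by
          match_scalars <;> field_simp <;> ring
        rw [this]; exact h3
      have hC := (key l' hl'0.le hl'1).mp hmem
      refine hout (-l' / (1 - l')) ?_ hC
      have htl' : t < l' := by rw [hl']; linarith
      rw [div_lt_iff₀ (by linarith : (0:ℝ) < 1 - l')]
      have h := (div_lt_iff₀ h1s).mp htl'
      nlinarith [h]
  have hbdd : BddAbove {l : ℝ | 0 ≤ l ∧ x - l • y ∈ C} := ⟨t, hub⟩
  have hmcoef : mcoef C x y = t :=
    le_antisymm (csSup_le ⟨t, htmem⟩ hub) (le_csSup hbdd htmem)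
  refine ⟨hmcoef, ?_⟩
  have hyx : y - x ≠ 0 := sub_ne_zero.mpr (Ne.symm hxy)
  have hxa : x - a = (-s) • (y - x) := by rw [hadef]; module
  have hya : y - a = (1 - s) • (y - x) := by rw [hadef]; module
  rw [hxa, hya, norm_smul, norm_smul]
  rw [Real.norm_eq_abs, Real.norm_eq_abs, abs_of_nonneg (by linarith : (0:ℝ) ≤ -s),
    abs_of_nonneg (by linarith : (0:ℝ) ≤ 1 - s)]
  rw [mul_div_mul_right _ _ (norm_ne_zero_iff.mpr hyx)]
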